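/- Let (X,G) be a small Polish structure and R a countable nontrivial commutative ring. Let G act on the polynomial ring R(X) = R[(y_x)_{x∈X}] (the ring of multivariate polynomials over R in variables indexed by X) by renaming variables: g·w(y_{x₁},…,y_{xₙ}) = w(y_{g x₁},…,y_{g xₙ}). Then (R(X),G) is a small Polish structure: G acts faithfully on R(X), the stabilizer of every polynomial is a closed subgroup of G, and for every n < ω there are only countably many orbits on R(X)ⁿ under the diagonal action of G. -/

import Mathlib

open MvPolynomial

lemma rename_congr_vars {σ τ R : Type*} [CommSemiring R] {f₁ f₂ : σ → τ}
    {p : MvPolynomial σ R} (h : ∀ i ∈ p.vars, f₁ i = f₂ i) :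
    rename f₁ p = rename f₂ p := by
  have := hom_congr_vars
    (f₁ := ((rename f₁ : MvPolynomial σ R →ₐ[R] MvPolynomial τ R) : MvPolynomial σ R →+* MvPolynomial τ R))
    (f₂ := ((rename f₂ : MvPolynomial σ R →ₐ[R] MvPolynomial τ R) : MvPolynomial σ R →+* MvPolynomial τ R))
    (p₁ := p) (p₂ := p) (by ext r; simp) (fun i hi _ => by simp [h i hi]) rfl
  simpa using this


/-- Let `(X,G)` be a small Polish structure and `R` a countable nontrivial
commutative ring. Let `G` act on the polynomial ring `R(X) = R[(y_x)_{x ∈ X}]` by renaming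
variables: `g • w = w(y_{g x₁}, …, y_{g xₙ})`, i.e. `g • w = MvPolynomial.rename (g • ·) w`.
Then `(R(X),G)` is a small Polish structure: `G` acts faithfully on `R(X)`, the stabilizer
of every polynomial is closed in `G`, and for every `n < ω` the set of orbits on `R(X)ⁿ`
under the diagonal action of `G` is countable. -/
theorem statement9 {G X R : Type*} [Group G] [TopologicalSpace G] [IsTopologicalGroup G]
    [PolishSpace G] [MulAction G X] [FaithfulSMul G X]
    (hstab : ∀ x : X, IsClosed {g : G | g • x = x})
    (hsmall : ∀ n : ℕ, Countable (Quotient (MulAction.orbitRel G (Fin n → X))))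
    [CommRing R] [Countable R] [Nontrivial R] :
    (∀ g₁ g₂ : G,
        (∀ w : MvPolynomial X R,
          MvPolynomial.rename (g₁ • ·) w = MvPolynomial.rename (g₂ • ·) w) → g₁ = g₂) ∧
    (∀ w : MvPolynomial X R, IsClosed {g : G | MvPolynomial.rename (g • ·) w = w}) ∧
    (∀ n : ℕ,
      Countable {o : Set (Fin n → MvPolynomial X R) | ∃ v : Fin n → MvPolynomial X R,
        o = {w | ∃ g : G, (fun i => MvPolynomial.rename (g • ·) (v i)) = w}}) := by
  classical
  refine ⟨?_, ?_, ?_⟩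
  · -- faithfulness
    intro g₁ g₂ h
    refine eq_of_smul_eq_smul (α := X) fun x => ?_
    have := h (MvPolynomial.X x)
    rw [rename_X, rename_X] at this
    exact X_injective this
  · -- closed stabilizers
    intro w
    let T : (↥w.vars → ↥w.vars) → Set G := fun σ => ⋂ x : ↥w.vars, {g : G | g • (x : X) = ((σ x : ↥w.vars) : X)}
    have hTclosed : ∀ σ, IsClosed (T σ) := by
      intro σ
      refine isClosed_iInter fun x => ?_
      by_cases h : ∃ h₀ : G, h₀ • (x : X) = ((σ x : ↥w.vars) : X)
      · obtain ⟨h₀, hh₀⟩ := h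
        have : {g : G | g • (x : X) = ((σ x : ↥w.vars) : X)}
            = (fun g => h₀⁻¹ * g) ⁻¹' {g : G | g • (x : X) = (x : X)} := by
          ext g
          simp only [Set.mem_setOf_eq, Set.mem_preimage, mul_smul, ← hh₀, inv_smul_eq_iff]
        rw [this]
        exact (hstab x).preimage (continuous_const.mul continuous_id)
      · have : {g : G | g • (x : X) = ((σ x : ↥w.vars) : X)} = ∅ := by
          ext g; simp only [Set.mem_setOf_eq, Set.mem_empty_iff_false, iff_false]
          exact fun hg => h ⟨g, hg⟩
        rw [this]; exact isClosed_empty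
    have key : {g : G | rename (g • ·) w = w}
        = ⋃ σ : {σ : ↥w.vars → ↥w.vars // ∀ g ∈ T σ, rename ((g • ·) : X → X) w = w}, T σ.val := by
      ext g
      constructor
      · intro hg
        have himg : ∀ x ∈ w.vars, g • x ∈ w.vars := by
          have h1 : w.vars ⊆ w.vars.image (g • ·) := by
            intro x hx
            have hx' : x ∈ (rename ((g • ·) : X → X) w).vars := by rw [hg]; exact hx
            exact vars_rename _ _ hx'
          have h2 : w.vars.image (g • ·) = w.vars :=
            (Finset.eq_of_subset_of_card_le h1 Finset.card_image_le).symm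
          intro x hx; rw [← h2]; exact Finset.mem_image_of_mem _ hx
        set σ : ↥w.vars → ↥w.vars := fun x => ⟨g • (x : X), himg _ x.2⟩ with hσdef
        have hgT : g ∈ T σ := Set.mem_iInter.2 fun x => rfl
        refine Set.mem_iUnion.2 ⟨⟨σ, ?_⟩, hgT⟩
        intro g' hg'
        have : rename ((g' • ·) : X → X) w = rename ((g • ·) : X → X) w := by
          refine rename_congr_vars fun i hi => ?_
          have := Set.mem_iInter.1 hg' ⟨i, hi⟩
          exact this
        rw [this, hg]
      · intro hg
        obtain ⟨⟨σ, hσ⟩, hgT⟩ := Set.mem_iUnion.1 hg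
        exact hσ g hgT
    rw [key]
    exact isClosed_iUnion_of_finite fun σ => hTclosed σ.val
  · -- countably many orbits
    intro n
    haveI : ∀ m : ℕ, Countable (MvPolynomial (Fin m) R) := fun m =>
      (AddMonoidAlgebra.coeffEquiv (R := R) (M := Fin m →₀ ℕ)).injective.countable
    haveI := hsmall
    let F : (Σ m : ℕ, Quotient (MulAction.orbitRel G (Fin m → X)) × (Fin n → MvPolynomial (Fin m) R))
        → Set (Fin n → MvPolynomial X R) := fun z =>
      Quotient.liftOn z.2.1
        (fun x => {w | ∃ g : G, (fun i => rename ((g • ·) : X → X) (rename x (z.2.2 i))) = w})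
        (by
          intro a b hab
          have hab' : ∃ g : G, g • b = a := hab
          obtain ⟨g, rfl⟩ := hab'
          ext w
          simp only [Set.mem_setOf_eq]
          constructor
          · rintro ⟨g', rfl⟩
            refine ⟨g' * g, ?_⟩
            funext i
            rw [rename_rename, rename_rename]
            exact congrArg (fun f => rename f (z.2.2 i))
              (by funext k; simp [mul_smul, Pi.smul_apply])
          · rintro ⟨g', rfl⟩
            refine ⟨g' * g⁻¹, ?_⟩
            funext i
            rw [rename_rename, rename_rename]
            exact congrArg (fun f => rename f (z.2.2 i))
              (by funext k; simp [mul_smul, Pi.smul_apply]))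
    have hsub : {o : Set (Fin n → MvPolynomial X R) | ∃ v : Fin n → MvPolynomial X R,
        o = {w | ∃ g : G, (fun i => rename ((g • ·) : X → X) (v i)) = w}} ⊆ Set.range F := by
      rintro o ⟨v, rfl⟩
      let s : Finset X := Finset.univ.biUnion fun i => (v i).vars
      let f : Fin s.card → X := fun k => ((s.equivFin.symm k : ↥s) : X)
      have hf : Function.Injective f :=
        Subtype.val_injective.comp s.equivFin.symm.injective
      have hrange : ∀ i, ↑(v i).vars ⊆ Set.range f := by
        intro i x hx
        have hxs : x ∈ s := Finset.mem_biUnion.2 ⟨i, Finset.mem_univ i, hx⟩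
        exact ⟨s.equivFin ⟨x, hxs⟩, by simp [f]⟩
      choose p hp using fun i =>
        exists_rename_eq_of_vars_subset_range (v i) f hf (hrange i)
      refine ⟨⟨s.card, ⟦f⟧, p⟩, ?_⟩
      show Quotient.liftOn (⟦f⟧ : Quotient (MulAction.orbitRel G (Fin s.card → X))) _ _ = _
      simp only [Quotient.liftOn_mk]
      ext w
      simp only [Set.mem_setOf_eq, hp]
    exact (Set.Countable.mono hsub (Set.countable_range F)).to_subtype
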